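/- Let G be a finite group of order 2^6 · 3^2 · 5 · 7 = 20160 such that the normalizer of a Sylow 7-subgroup P has order 21. Then C_G(P) = P. -/

import Mathlib

open Subgroup MulAction Pointwise

private lemma subgroup_eq_of_le_of_card_le {G : Type*} [Group G] [Finite G] {H K : Subgroup G}
    (h : H ≤ K) (hc : Nat.card K ≤ Nat.card H) : H = K := by
  apply SetLike.coe_injective
  exact Set.eq_of_subset_of_ncard_le (show (H : Set G) ⊆ K from h)
    (by rwa [← Nat.card_coe_set_eq, ← Nat.card_coe_set_eq]) (Set.toFinite _)

private lemma sylow_card_eq {G : Type*} [Group G] [Finite G] {p : ℕ} [Fact p.Prime]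
    (P : Sylow p G) {m : ℕ} (hG : Nat.card G = m) (h1 : p ∣ m) (h2 : ¬ p ^ 2 ∣ m) :
    Nat.card (P : Subgroup G) = p := by
  obtain ⟨n, hn⟩ := IsPGroup.iff_card.mp P.2
  match n, hn with
  | 0, hn =>
    exfalso
    apply P.not_dvd_index
    have := Subgroup.card_mul_index (P : Subgroup G)
    rw [hn, pow_zero, one_mul, hG] at this
    rw [this]
    exact h1
  | 1, hn => simpa using hn
  | (n+2), hn =>
    exfalso
    apply h2
    have hd : Nat.card (P : Subgroup G) ∣ m := hG ▸ (P : Subgroup G).card_subgroup_dvd_card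
    exact dvd_trans (pow_dvd_pow p (by omega)) (hn ▸ hd)

private lemma zmod5_pow7 : ∀ x : ZMod 5, x ^ 7 = 1 → x = 1 := by decide

theorem self_centralizing_sylow_seven_in_group_20160 (G : Type*) [Group G] [Finite G]
    (hG : Nat.card G = 2 ^ 6 * 3 ^ 2 * 5 * 7) (P : Sylow 7 G)
    (hN : Nat.card (Subgroup.normalizer ((P : Subgroup G) : Set G)) = 21) :
    Subgroup.centralizer ((P : Subgroup G) : Set G) = (P : Subgroup G) := by
  haveI hp7 : Fact (Nat.Prime 7) := ⟨by norm_num⟩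
  set Pg : Subgroup G := (P : Subgroup G) with hPg
  set C : Subgroup G := Subgroup.centralizer (Pg : Set G) with hC
  have hcardP : Nat.card Pg = 7 := sylow_card_eq P hG (by norm_num) (by norm_num)
  -- centralizer ≤ normalizer
  have hCleN : C ≤ Subgroup.normalizer (Pg : Set G) := by
    intro g hg
    rw [Subgroup.mem_normalizer_iff]
    intro h
    constructor
    · intro hh
      have e := hg h hh
      have e2 : g * h * g⁻¹ = h := by rw [← e, mul_inv_cancel_right]
      rwa [e2]
    · intro hk
      have e := hg _ hk
      have e2 : h = g * h * g⁻¹ := by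
        apply mul_left_cancel (a := g)
        calc g * h = g * h * g⁻¹ * g := by rw [inv_mul_cancel_right]
        _ = g * (g * h * g⁻¹) := e
      rwa [e2]
  -- P ≤ centralizer
  have hcyc : IsCyclic Pg := isCyclic_of_prime_card hcardP
  haveI hcomm : IsMulCommutative Pg := ⟨⟨fun a b => by
    letI := hcyc.commGroup
    exact mul_comm a b⟩⟩
  have hPleC : Pg ≤ C := Subgroup.le_centralizer Pg
  -- card C is 7 or 21
  have hCd : Nat.card C ∣ 21 := by
    have := Subgroup.card_dvd_of_le hCleN
    rwa [hN] at this
  have h7C : 7 ∣ Nat.card C := by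
    have := Subgroup.card_dvd_of_le hPleC
    rwa [hcardP] at this
  have hCpos : 0 < Nat.card C := Nat.card_pos
  have hcases : Nat.card C = 7 ∨ Nat.card C = 21 := by
    have h1 : Nat.card C ≤ 21 := Nat.le_of_dvd (by norm_num) hCd
    set c := Nat.card C
    interval_cases c <;> revert hCd h7C <;> decide
  rcases hcases with hc7 | hc21
  · exact (subgroup_eq_of_le_of_card_le hPleC (by rw [hcardP, hc7])).symm
  · exfalso
    have hCN : C = Subgroup.normalizer (Pg : Set G) := subgroup_eq_of_le_of_card_le hCleN (by rw [hN, hc21])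
    have hP' : Subgroup.normalizer (Pg : Set G) ≤ Subgroup.centralizer (Pg : Set G) := hCN.ge
    -- Burnside normal p-complement
    have hcompl := MonoidHom.ker_transferSylow_isComplement' P hP'
    set K : Subgroup G := (MonoidHom.transferSylow P hP').ker with hK
    have hcardK : Nat.card K = 2880 := by
      have := hcompl.card_mul
      rw [hcardP, hG] at this
      omega
    haveI hp5 : Fact (Nat.Prime 5) := ⟨by norm_num⟩
    -- action of P on Sylow 5-subgroups of K
    letI : MulAction ↥Pg (Sylow 5 ↥K) :=
      MulAction.compHom _ ((MulAut.conjNormal (H := K)).comp Pg.subtype)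
    have hndvd : ¬ (7 ∣ Nat.card (Sylow 5 ↥K)) := by
      intro hdvd
      obtain ⟨Q₀⟩ := (inferInstance : Nonempty (Sylow 5 ↥K))
      have h1 : Nat.card (Sylow 5 ↥K) ∣ (Q₀ : Subgroup ↥K).index := Sylow.card_dvd_index Q₀
      have h2 : (Q₀ : Subgroup ↥K).index ∣ Nat.card ↥K := Subgroup.index_dvd_card _
      rw [hcardK] at h2
      have : (7 : ℕ) ∣ 2880 := dvd_trans hdvd (dvd_trans h1 h2)
      norm_num at this
    obtain ⟨Q, hQfix⟩ := P.2.nonempty_fixed_point_of_prime_not_dvd_card (Sylow 5 ↥K) hndvd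
    -- Q' := image of Q in G, has order 5
    have hcardQ : Nat.card (Q : Subgroup ↥K) = 5 :=
      sylow_card_eq Q hcardK (by norm_num) (by norm_num)
    set Q' : Subgroup G := (Q : Subgroup ↥K).map K.subtype with hQ'
    have hcardQ' : Nat.card Q' = 5 := by
      rw [← hcardQ]
      exact (Nat.card_congr
        (Subgroup.equivMapOfInjective _ _ K.subtype_injective).toEquiv).symm
    -- cyclic generator of Q'
    haveI : Fact (Nat.Prime 5) := hp5
    have hcycQ : IsCyclic ↥Q' := isCyclic_of_prime_card hcardQ'
    obtain ⟨g0, hg0⟩ := IsCyclic.exists_generator (α := ↥Q')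
    set q : G := (g0 : G) with hq
    have hqQ' : q ∈ Q' := g0.2
    have hordq : orderOf q = 5 := by
      rw [Subgroup.orderOf_coe]
      have hdvd : orderOf g0 ∣ 5 := hcardQ' ▸ orderOf_dvd_natCard g0
      rcases Nat.Prime.eq_one_or_self_of_dvd (by norm_num : Nat.Prime 5) _ hdvd with h | h
      · exfalso
        have hg1 : g0 = 1 := orderOf_eq_one_iff.mp h
        have hone : Nat.card ↥Q' = 1 := by
          have hall : ∀ x : ↥Q', x = 1 := fun x => by
            obtain ⟨k, hk⟩ := hg0 x
            rw [← hk, hg1]; simp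
          exact Nat.card_eq_one_iff_unique.mpr ⟨⟨fun a b => (hall a).trans (hall b).symm⟩, ⟨1⟩⟩
        omega
      · exact h
    have hQ'z : Q' = Subgroup.zpowers q := by
      apply le_antisymm
      · intro x hx
        obtain ⟨k, hk⟩ := hg0 ⟨x, hx⟩
        rw [Subgroup.mem_zpowers_iff]
        refine ⟨k, ?_⟩
        have := congrArg (fun z : ↥Q' => (z : G)) hk
        simpa [hq] using this
      · exact Subgroup.zpowers_le.mpr hqQ'
    -- P normalizes Q'
    have hPnormQ' : ∀ g ∈ Pg, ∀ x ∈ Q', g * x * g⁻¹ ∈ Q' := by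
      intro g hg x hx
      obtain ⟨y, hy, rfl⟩ := hx
      have h1 : (⟨g, hg⟩ : ↥Pg) • Q = Q := hQfix ⟨g, hg⟩
      have h2 : (MulAut.conjNormal (H := K) g) • (Q : Subgroup ↥K) = (Q : Subgroup ↥K) :=
        congrArg Sylow.toSubgroup h1
      have h3 : (MulAut.conjNormal (H := K) g) y ∈ (Q : Subgroup ↥K) := by
        rw [← h2]
        exact Subgroup.smul_mem_pointwise_smul y _ _ hy
      refine ⟨_, h3, ?_⟩
      simp [MulAut.conjNormal_apply]
    -- every element of P commutes with q
    have hcomm_q : ∀ g ∈ Pg, g * q * g⁻¹ = q := by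
      intro g hg
      have hmem := hPnormQ' g hg q hqQ'
      rw [hQ'z, Subgroup.mem_zpowers_iff] at hmem
      obtain ⟨m, hm⟩ := hmem
      have key : ∀ j : ℕ, g ^ j * q * (g ^ j)⁻¹ = q ^ (m ^ j) := by
        intro j
        induction j with
        | zero => simp
        | succ j ih =>
          have e1 : g ^ (j + 1) * q * (g ^ (j + 1))⁻¹
              = g * (g ^ j * q * (g ^ j)⁻¹) * g⁻¹ := by
            rw [pow_succ']
            group
          rw [e1, ih, ← conj_zpow, ← hm, ← zpow_mul]
          congr 1
          rw [pow_succ]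
          ring
      have hg7 : g ^ 7 = 1 := by
        have h1 : (⟨g, hg⟩ : ↥Pg) ^ 7 = 1 := by
          rw [← hcardP]; exact pow_card_eq_one'
        have := congrArg (Subgroup.subtype Pg) h1
        simpa using this
      have h7 := key 7
      rw [hg7] at h7
      simp only [one_mul, inv_one, mul_one] at h7
      -- h7 : q = q ^ (m ^ 7)
      have h5dvd : (5 : ℤ) ∣ m ^ 7 - 1 := by
        have : q ^ (m ^ 7 - 1) = 1 := by
          rw [zpow_sub, ← h7, zpow_one, mul_inv_cancel]
        have h := orderOf_dvd_iff_zpow_eq_one.mpr this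
        rwa [hordq] at h
      have hz : ((m : ZMod 5)) ^ 7 = 1 := by
        have h0 : ((m ^ 7 - 1 : ℤ) : ZMod 5) = 0 :=
          (ZMod.intCast_zmod_eq_zero_iff_dvd _ 5).mpr h5dvd
        push_cast at h0
        exact sub_eq_zero.mp h0
      have hm1 : (5 : ℤ) ∣ m - 1 := by
        have := zmod5_pow7 _ hz
        have h0 : ((m - 1 : ℤ) : ZMod 5) = 0 := by
          push_cast
          rw [this]
          ring
        exact (ZMod.intCast_zmod_eq_zero_iff_dvd _ 5).mp h0
      have hqm : q ^ m = q := by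
        have h1 : q ^ (m - 1) = 1 := by
          apply orderOf_dvd_iff_zpow_eq_one.mp
          rw [hordq]; exact hm1
        calc q ^ m = q ^ (1 + (m - 1)) := by ring_nf
        _ = q ^ (1 : ℤ) * q ^ (m - 1) := zpow_add q 1 (m - 1)
        _ = q := by rw [h1, zpow_one, mul_one]
      rw [← hm]; exact hqm
    -- Q' ≤ C, contradiction
    have hQ'leC : Q' ≤ C := by
      rw [hQ'z]
      intro x hx
      rw [Subgroup.mem_zpowers_iff] at hx
      obtain ⟨k, rfl⟩ := hx
      rw [hC, Subgroup.mem_centralizer_iff]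
      intro g hg
      have hgg : g * q = q * g := mul_inv_eq_iff_eq_mul.mp (hcomm_q g hg)
      exact ((Commute.zpow_right hgg k)).eq
    have h5d : (5 : ℕ) ∣ 21 := by
      have := Subgroup.card_dvd_of_le hQ'leC
      rwa [hcardQ', hc21] at this
    norm_num at h5d
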